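/- Every agreeable rule is non-obviously manipulable: for every agent i and every true preference Rᵢ, there is no misreport R'ᵢ that is an obvious manipulation of the agreeable rule φ^S at Rᵢ. -/

import Mathlib

open Finset

/-- A preference: a total preorder on ℝ₊ with a unique global maximum (peak). -/
structure Pref where
  R : ℝ → ℝ → Prop
  total : ∀ x y : ℝ, 0 ≤ x → 0 ≤ y → R x y ∨ R y x
  trans : ∀ x y z : ℝ, R x y → R y z → R x z
  peak : ℝ
  peak_nonneg : 0 ≤ peak
  peak_max : ∀ x : ℝ, 0 ≤ x → R peak x
  peak_unique : ∀ x : ℝ, 0 ≤ x → R x peak → x = peak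

/-- Strict preference. -/
def Pref.P (r : Pref) (x y : ℝ) : Prop := r.R x y ∧ ¬ r.R y x

variable {n : ℕ}

/-- Feasible allotments: nonnegative, summing to the social endowment Ω. -/
def Feasible (Ω : ℝ) (x : Fin n → ℝ) : Prop :=
  (∀ i, 0 ≤ x i) ∧ ∑ i, x i = Ω

/-- Efficiency (Pareto optimality) of a rule. -/
def Efficient (Ω : ℝ) (φ : (Fin n → Pref) → Fin n → ℝ) : Prop :=
  ∀ R : Fin n → Pref, ¬ ∃ x : Fin n → ℝ, Feasible Ω x ∧
    (∀ i, (R i).R (x i) (φ R i)) ∧ (∃ i, (R i).P (x i) (φ R i))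

/-- Strategy-proofness. -/
def StrategyProof (φ : (Fin n → Pref) → Fin n → ℝ) : Prop :=
  ∀ (R : Fin n → Pref) (i : Fin n) (Ri' : Pref),
    (R i).R (φ R i) (φ (Function.update R i Ri') i)

/-- Own-peak-onliness. -/
def OwnPeakOnly (φ : (Fin n → Pref) → Fin n → ℝ) : Prop :=
  ∀ (R : Fin n → Pref) (i : Fin n) (Ri' : Pref),
    Ri'.peak = (R i).peak → φ (Function.update R i Ri') i = φ R i

/-- Option set of agent `i` with preference `Ri` at rule `φ`. -/
def OptionSet (φ : (Fin n → Pref) → Fin n → ℝ) (i : Fin n) (Ri : Pref) : Set ℝ :=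
  {x | ∃ R : Fin n → Pref, R i = Ri ∧ φ R i = x}

/-- `Ri'` is a manipulation of `φ` at `Ri` (for agent `i`). -/
def Manipulation (φ : (Fin n → Pref) → Fin n → ℝ) (i : Fin n) (Ri Ri' : Pref) : Prop :=
  ∃ R : Fin n → Pref, R i = Ri ∧ Ri.P (φ (Function.update R i Ri') i) (φ R i)

/-- `Ri'` is an obvious manipulation of `φ` at `Ri`. -/
def ObviousManipulation (φ : (Fin n → Pref) → Fin n → ℝ) (i : Fin n) (Ri Ri' : Pref) : Prop :=
  Manipulation φ i Ri Ri' ∧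
  ∀ x' ∈ OptionSet φ i Ri', ∃ x ∈ OptionSet φ i Ri, Ri.P x' x

/-- Non-obvious manipulability. -/
def NonObviouslyManipulable (φ : (Fin n → Pref) → Fin n → ℝ) : Prop :=
  ∀ (i : Fin n) (Ri Ri' : Pref), ¬ ObviousManipulation φ i Ri Ri'

/-- Equal division lower bound. -/
def EqualDivisionLowerBound (Ω : ℝ) (φ : (Fin n → Pref) → Fin n → ℝ) : Prop :=
  ∀ (R : Fin n → Pref) (i : Fin n), (R i).R (φ R i) (Ω / n)

/-- Equal division guarantee. -/
def EqualDivisionGuarantee (Ω : ℝ) (φ : (Fin n → Pref) → Fin n → ℝ) : Prop :=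
  ∀ (R : Fin n → Pref) (i : Fin n), (R i).peak = Ω / n → φ R i = Ω / n

/-- Unanimity. -/
def Unanimity (Ω : ℝ) (φ : (Fin n → Pref) → Fin n → ℝ) : Prop :=
  ∀ R : Fin n → Pref, ∑ i, (R i).peak = Ω → ∀ i, φ R i = (R i).peak

/-- Non-bossiness. -/
def NonBossy (φ : (Fin n → Pref) → Fin n → ℝ) : Prop :=
  ∀ (R : Fin n → Pref) (i : Fin n) (Ri' : Pref),
    φ (Function.update R i Ri') i = φ R i → φ (Function.update R i Ri') = φ R

/-- `S` is an agreeable coalition for profile `R`. -/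
def AgreeableCoalition (Ω : ℝ) (R : Fin n → Pref) (S : Finset (Fin n)) : Prop :=
  ∑ j ∈ S, (R j).peak = (S.card : ℝ) / n * Ω

/-- An agreeable selection. -/
def AgreeableSelection (Ω : ℝ) (S : (Fin n → Pref) → Finset (Fin n)) : Prop :=
  (∀ R, AgreeableCoalition Ω R (S R)) ∧
  (∀ (R : Fin n → Pref) (i : Fin n) (Ri' : Pref), Ri'.peak = (R i).peak →
    (i ∈ S R ↔ i ∈ S (Function.update R i Ri'))) ∧
  (∀ R : Fin n → Pref, AgreeableCoalition Ω R Finset.univ → S R = Finset.univ)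

/-- `φ` is an agreeable rule. -/
def IsAgreeableRule (Ω : ℝ) (φ : (Fin n → Pref) → Fin n → ℝ) : Prop :=
  ∃ S : (Fin n → Pref) → Finset (Fin n), AgreeableSelection Ω S ∧
    ∀ R i, φ R i = if i ∈ S R then (R i).peak else Ω / n

/-- every agreeable rule is non-obviously manipulable. -/
theorem stmt_7 (n : ℕ) (hn : 2 ≤ n) (Ω : ℝ) (hΩ : 0 < Ω)
    (S : (Fin n → Pref) → Finset (Fin n)) (hS : AgreeableSelection Ω S)
    (φ : (Fin n → Pref) → Fin n → ℝ)
    (hφ : ∀ R i, φ R i = if i ∈ S R then (R i).peak else Ω / n) :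
    NonObviouslyManipulable φ := by
  intro i Ri Ri' ⟨_, hobv⟩
  have hn0 : (0:ℝ) < n := by positivity
  set p : ℝ := Ω / n with hp
  have hp0 : 0 ≤ p := by positivity
  let P0 : Pref := {
    R := fun x y => |x - p| ≤ |y - p|
    total := fun x y _ _ => le_total _ _
    trans := fun x y z h1 h2 => le_trans h1 h2
    peak := p
    peak_nonneg := hp0
    peak_max := fun x _ => by simp [abs_nonneg]
    peak_unique := fun x _ h => by
      have h0 : |x - p| = 0 := le_antisymm (by simpa using h) (abs_nonneg _)
      have := abs_eq_zero.mp h0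
      linarith }
  let R : Fin n → Pref := fun j => if j = i then Ri' else P0
  have hRi : R i = Ri' := if_pos rfl
  have hx' : φ R i = p := by
    rw [hφ]
    split_ifs with hmem
    · -- i ∈ S R forces Ri'.peak = p
      have hag := hS.1 R
      unfold AgreeableCoalition at hag
      set T := S R with hT
      have hsum : ∑ j ∈ T, (R j).peak = Ri'.peak + ((T.card : ℝ) - 1) * p := by
        rw [← Finset.add_sum_erase _ _ hmem]
        have h1 : (R i).peak = Ri'.peak := by rw [hRi]
        have h2 : ∑ j ∈ T.erase i, (R j).peak = ((T.card : ℝ) - 1) * p := by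
          rw [Finset.sum_congr rfl (fun j hj => ?_), Finset.sum_const,
            Finset.card_erase_of_mem hmem, nsmul_eq_mul]
          · have hc : 1 ≤ T.card := Finset.card_pos.mpr ⟨i, hmem⟩
            rw [Nat.cast_sub hc, Nat.cast_one]
          · have hji : j ≠ i := Finset.ne_of_mem_erase hj
            show (R j).peak = p
            simp only [R, if_neg hji]
            rfl
        rw [h1, h2]
      have hcp : ((T.card : ℝ)) / n * Ω = (T.card : ℝ) * p := by
        field_simp [hp]
        rw [hp, mul_assoc, mul_div_cancel₀ _ hn0.ne']
      rw [hsum, hcp] at hag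
      have : Ri'.peak = p := by linarith [hag]
      rw [hRi, this]
    · rfl
  obtain ⟨x, ⟨R2, hR2, hx⟩, hP⟩ := hobv p ⟨R, hRi, hx'⟩
  rw [hφ] at hx
  have hxcase : x = Ri.peak ∨ x = p := by
    split_ifs at hx with h
    · left; rw [← hx, hR2]
    · right; exact hx.symm
  rcases hxcase with h | h
  · exact hP.2 (h ▸ Ri.peak_max p hp0)
  · exact hP.2 (h ▸ hP.1)
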